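/- The ring game G admits stability: if s -> s' is an improvement step in G and s is legitimate, then s' is legitimate. -/

import Mathlib

/-!
Game-theoretic formalization of Dijkstra's self-stabilization (Apt & Shoja).
Players are `Fin n`; a joint strategy is `s : Fin n → C`.
-/

/-- Payoff in the ring game `G` on the directed ring `0 → 1 → ⋯ → n-1 → 0`:
player `0` plays the anti-coordination game with respect to its predecessor
(player `n-1`, i.e. `0 - 1` in `Fin n`); every other player `i` plays the
coordination game with respect to its predecessor `i - 1`. -/
def ringPayoff {n : ℕ} [NeZero n] {C : Type*} [DecidableEq C]
    (s : Fin n → C) (i : Fin n) : ℕ :=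
  if i = 0 then (if s i = s (i - 1) then 0 else 1)
  else (if s i = s (i - 1) then 1 else 0)

/-- `s i` is a best response of player `i` to the strategies of the others in `s`. -/
def BestResponse {n : ℕ} {C : Type*}
    (p : (Fin n → C) → Fin n → ℕ) (s : Fin n → C) (i : Fin n) : Prop :=
  ∀ c : C, p (Function.update s i c) i ≤ p s i

/-- An improvement step from `s` to `s'` in which player `i` is selected:
only player `i` changes its strategy and its payoff strictly increases. -/
def StepAt {n : ℕ} {C : Type*}
    (p : (Fin n → C) → Fin n → ℕ) (i : Fin n) (s s' : Fin n → C) : Prop :=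
  (∀ j, j ≠ i → s' j = s j) ∧ p s i < p s' i

/-- A joint strategy is legitimate if exactly one player does not play a best response. -/
def Legitimate {n : ℕ} {C : Type*}
    (p : (Fin n → C) → Fin n → ℕ) (s : Fin n → C) : Prop :=
  ∃! i : Fin n, ¬ BestResponse p s i

section Aux
set_option linter.unusedSectionVars false
variable {n : ℕ} [NeZero n] {C : Type*} [Fintype C] [DecidableEq C]

lemma rg_one_ne_zero (hn : 2 ≤ n) : (1 : Fin n) ≠ 0 := by
  intro h
  have h1 : (1 : Fin n).val = 1 := by
    rw [Fin.val_one']; exact Nat.mod_eq_of_lt (by omega)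
  rw [h] at h1
  simp at h1

lemma rg_sub_one_ne (hn : 2 ≤ n) (i : Fin n) : i - 1 ≠ i := fun h =>
  rg_one_ne_zero hn (sub_eq_self.mp h)

lemma rg_val_sub_one (k : Fin n) (hk : k ≠ 0) : (k - 1).val = k.val - 1 := by
  cases n with
  | zero => exact k.elim0
  | succ m => rw [Fin.coe_sub_one, if_neg hk]

lemma rg_le_one (s : Fin n → C) (i : Fin n) : ringPayoff s i ≤ 1 := by
  unfold ringPayoff; split <;> split <;> simp

lemma rg_update (hn : 2 ≤ n) (s : Fin n → C) (i : Fin n) (c : C) :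
    ringPayoff (Function.update s i c) i =
      if i = 0 then (if c = s (i - 1) then 0 else 1)
      else (if c = s (i - 1) then 1 else 0) := by
  have h := rg_sub_one_ne hn i
  simp [ringPayoff, Function.update_of_ne h]

lemma rg_br_char (hn : 2 ≤ n) (hC : 2 ≤ Fintype.card C)
    (s : Fin n → C) (i : Fin n) :
    BestResponse (ringPayoff (n := n) (C := C)) s i ↔
      (if i = 0 then s i ≠ s (i - 1) else s i = s (i - 1)) := by
  constructor
  · intro hbr
    split
    · rename_i h0
      subst h0
      intro heq
      obtain ⟨c, hc⟩ := Fintype.exists_ne_of_one_lt_card (by omega) (s ((0 : Fin n) - 1))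
      rw [zero_sub] at heq hc
      have h2 := hbr c
      rw [rg_update hn] at h2
      simp [ringPayoff, heq, hc] at h2
    · rename_i h0
      by_contra hne
      have h2 := hbr (s (i - 1))
      rw [rg_update hn] at h2
      simp [ringPayoff, h0, hne] at h2
  · intro h c
    rw [rg_update hn]
    by_cases h0 : i = 0
    · subst h0
      simp only [if_pos rfl, if_true, eq_self_iff_true, zero_sub] at h ⊢
      unfold ringPayoff
      simp only [if_pos rfl, if_true, eq_self_iff_true, zero_sub]
      rw [if_neg h]
      split <;> omega
    · simp only [if_neg h0] at h ⊢
      simp [ringPayoff, h0, h]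
      split <;> omega

lemma rg_not_all_br (hn : 2 ≤ n) (hC : 2 ≤ Fintype.card C) (s : Fin n → C) :
    ¬ ∀ i : Fin n, BestResponse (ringPayoff (n := n) (C := C)) s i := by
  intro hall
  have key : ∀ m : ℕ, ∀ k : Fin n, k.val ≤ m → s k = s 0 := by
    intro m
    induction m with
    | zero =>
      intro k hk
      have hk0 : k = 0 := by
        exact Fin.ext (by simp [Fin.val_zero, Nat.le_zero.mp hk])
      rw [hk0]
    | succ m ih =>
      intro k hk
      by_cases hk0 : k = 0
      · rw [hk0]
      · have hbr := (rg_br_char hn hC s k).mp (hall k)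
        rw [if_neg hk0] at hbr
        have hkpos : 0 < k.val := by
          rcases Nat.eq_zero_or_pos k.val with h | h
          · exact absurd (Fin.ext (by simp [Fin.val_zero, h])) hk0
          · exact h
        have hv : (k - 1).val ≤ m := by
          rw [rg_val_sub_one k hk0]; omega
        rw [hbr, ih _ hv]
  have h0 := (rg_br_char hn hC s 0).mp (hall 0)
  rw [if_pos rfl] at h0
  exact h0 (key n ((0 : Fin n) - 1) (Nat.le_of_lt (Fin.is_lt _))).symm
end Aux

/-- The ring game `G` admits stability: if `s → s'` is an
improvement step in `G` and `s` is legitimate, then `s'` is legitimate. -/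
theorem ring_game_admits_stability
    (n : ℕ) [NeZero n] (hn : 2 ≤ n)
    (C : Type*) [Fintype C] [DecidableEq C] (hC : 2 ≤ Fintype.card C)
    (s s' : Fin n → C) (i : Fin n)
    (hstep : StepAt (ringPayoff (n := n) (C := C)) i s s')
    (hleg : Legitimate (ringPayoff (n := n) (C := C)) s) :
    Legitimate (ringPayoff (n := n) (C := C)) s' := by

  unfold StepAt at hstep
  obtain ⟨hdiff, hlt⟩ := hstep
  unfold Legitimate at hleg ⊢
  obtain ⟨j0, hj0, huniq⟩ := hleg
  have hs' : s' = Function.update s i (s' i) := by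
    funext j
    by_cases hj : j = i
    · subst hj; simp
    · simp [Function.update_of_ne hj, hdiff j hj]
  have hiNBR : ¬ BestResponse (ringPayoff (n := n) (C := C)) s i := by
    intro hbr
    have h2 := hbr (s' i)
    rw [← hs'] at h2
    omega
  have hji : j0 = i := (huniq i hiNBR).symm
  subst hji
  have hBRs : ∀ j, j ≠ j0 → BestResponse (ringPayoff (n := n) (C := C)) s j := by
    intro j hj
    by_contra h
    exact hj (huniq j h)
  have hps'i : ringPayoff s' j0 = 1 := le_antisymm (rg_le_one s' j0) (by omega)
  have hBRi' : BestResponse (ringPayoff (n := n) (C := C)) s' j0 := by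
    intro c
    rw [hps'i]
    exact rg_le_one _ j0
  have htrans : ∀ j, j ≠ j0 → j ≠ j0 + 1 →
      (BestResponse (ringPayoff (n := n) (C := C)) s' j ↔
        BestResponse (ringPayoff (n := n) (C := C)) s j) := by
    intro j hj hj1
    have h1 : s' j = s j := hdiff j hj
    have h2 : s' (j - 1) = s (j - 1) := by
      apply hdiff
      intro h
      exact hj1 (sub_eq_iff_eq_add.mp h)
    rw [rg_br_char hn hC s' j, rg_br_char hn hC s j, h1, h2]
  have hNBR1 : ¬ BestResponse (ringPayoff (n := n) (C := C)) s' (j0 + 1) := by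
    intro hbr
    apply rg_not_all_br hn hC s'
    intro j
    by_cases hji : j = j0
    · subst hji; exact hBRi'
    · by_cases hj1 : j = j0 + 1
      · subst hj1; exact hbr
      · exact (htrans j hji hj1).mpr (hBRs j hji)
  refine ⟨j0 + 1, hNBR1, ?_⟩
  intro j hj
  by_cases hji : j = j0
  · subst hji; exact absurd hBRi' hj
  · by_cases hj1 : j = j0 + 1
    · exact hj1
    · exact absurd ((htrans j hji hj1).mpr (hBRs j hji)) hj
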